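/- Let q(τ₁) ∈ Sⁿ⁻¹ be a solution of the Neumann system q'' = −A⁻¹q + λq with λ = (A⁻¹q, q) − (q', q') (so that (q,q) = 1 and (q,q') = 0 are preserved). Then the function F₀(q, q') = (Aq', q')(Aq, q) − (Aq, q')² − (Aq, q) is a first integral. -/

import Mathlib

open Matrix

private lemma dot_deriv {n : ℕ} {f g : ℝ → Fin n → ℝ} {f' g' : Fin n → ℝ} {t : ℝ}
    (hf : HasDerivAt f f' t) (hg : HasDerivAt g g' t) :
    HasDerivAt (fun s => f s ⬝ᵥ g s) (f' ⬝ᵥ g t + f t ⬝ᵥ g') t := by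
  simp only [dotProduct, ← Finset.sum_add_distrib]
  exact HasDerivAt.fun_sum fun i _ => ((hasDerivAt_pi.mp hf i).mul (hasDerivAt_pi.mp hg i))

private lemma mulVec_deriv {n : ℕ} (A : Matrix (Fin n) (Fin n) ℝ) {f : ℝ → Fin n → ℝ}
    {f' : Fin n → ℝ} {t : ℝ} (hf : HasDerivAt f f' t) :
    HasDerivAt (fun s => A.mulVec (f s)) (A.mulVec f') t := by
  refine hasDerivAt_pi.mpr fun i => ?_
  simp only [Matrix.mulVec, dotProduct]
  exact HasDerivAt.fun_sum fun j _ => (hasDerivAt_pi.mp hf j).const_mul _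

/-- `F₀(q,q') = (Aq',q')(Aq,q) - (Aq,q')² - (Aq,q)` is a first integral of the Neumann
system `q'' = -A⁻¹q + λq` on `Sⁿ⁻¹`, with `λ = (A⁻¹q,q) - (q',q')`. -/
theorem neumann_F0_integral (n : ℕ) (a : Fin n → ℝ) (ha : ∀ i, 0 < a i)
    (A : Matrix (Fin n) (Fin n) ℝ) (hA : A = Matrix.diagonal a)
    (q v : ℝ → Fin n → ℝ)
    (lam : ℝ → ℝ)
    (hlam : ∀ t, lam t = (A⁻¹.mulVec (q t) ⬝ᵥ q t) - (v t ⬝ᵥ v t))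
    (hq : ∀ t, HasDerivAt q (v t) t)
    (hv : ∀ t, HasDerivAt v (-(A⁻¹.mulVec (q t)) + lam t • q t) t)
    (hcon1 : ∀ t, q t ⬝ᵥ q t = 1) (hcon2 : ∀ t, q t ⬝ᵥ v t = 0) (t : ℝ) :
    HasDerivAt (fun s => (A.mulVec (v s) ⬝ᵥ v s) * (A.mulVec (q s) ⬝ᵥ q s) -
      (A.mulVec (q s) ⬝ᵥ v s) ^ 2 - (A.mulVec (q s) ⬝ᵥ q s)) 0 t := by
  have hdet : IsUnit A.det := by
    subst hA
    rw [Matrix.det_diagonal, isUnit_iff_ne_zero]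
    exact Finset.prod_ne_zero_iff.mpr fun i _ => (ha i).ne'
  have hAA : ∀ x : Fin n → ℝ, A.mulVec (A⁻¹.mulVec x) = x := by
    intro x
    rw [Matrix.mulVec_mulVec, Matrix.mul_nonsing_inv _ hdet, Matrix.one_mulVec]
  have hsym : ∀ x y : Fin n → ℝ, A.mulVec x ⬝ᵥ y = x ⬝ᵥ A.mulVec y := by
    subst hA
    intro x y
    simp only [dotProduct, Matrix.mulVec_diagonal]
    exact Finset.sum_congr rfl fun i _ => by ring
  set w : Fin n → ℝ := -(A⁻¹.mulVec (q t)) + lam t • q t with hw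
  have hAw : A.mulVec w = -(q t) + lam t • A.mulVec (q t) := by
    rw [hw, Matrix.mulVec_add, Matrix.mulVec_neg, Matrix.mulVec_smul, hAA]
  have hβ := dot_deriv (mulVec_deriv A (hq t)) (hq t)
  have hγ := dot_deriv (mulVec_deriv A (hq t)) (hv t)
  have hα := dot_deriv (mulVec_deriv A (hv t)) (hv t)
  have H := ((hα.mul hβ).sub (hγ.pow 2)).sub hβ
  convert H using 1
  · rfl
  · rfl
  · rfl
  have e1 : A.mulVec (v t) ⬝ᵥ q t = A.mulVec (q t) ⬝ᵥ v t := by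
    rw [hsym, dotProduct_comm]
  have e2 : A.mulVec w ⬝ᵥ v t = lam t * (A.mulVec (q t) ⬝ᵥ v t) := by
    rw [hAw, add_dotProduct, neg_dotProduct, smul_dotProduct,
      hcon2 t, smul_eq_mul]
    ring
  have e3 : A.mulVec (v t) ⬝ᵥ w = lam t * (A.mulVec (q t) ⬝ᵥ v t) := by
    rw [hsym, hAw, dotProduct_add, dotProduct_neg,
      dotProduct_smul, dotProduct_comm (v t) (q t), hcon2 t,
      smul_eq_mul, dotProduct_comm (v t)]
    ring
  have e4 : A.mulVec (q t) ⬝ᵥ w = -1 + lam t * (A.mulVec (q t) ⬝ᵥ q t) := by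
    rw [hsym, hAw, dotProduct_add, dotProduct_neg,
      dotProduct_smul, hcon1 t, smul_eq_mul,
      dotProduct_comm (q t)]
  rw [e1, e2, e3, e4]
  ring
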